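/- Let C be a q×q simple circuit matrix and let D be the q×q diagonal matrix whose i-th diagonal entry is the i-th row sum of C. Then the 2q×2q block matrix A = (1/(2·tr D)) · [[D, −C],[−Cᵀ, D]] is a density matrix and is separable in ℂ^2 ⊗ ℂ^q. -/

import Mathlib

open Matrix BigOperators Kronecker
open scoped ComplexOrder

noncomputable section

/-- The `(p,q)`-partial transpose of a matrix indexed by `Fin p × Fin q`:
`A^pT_{(i,j),(k,l)} = A_{(i,l),(k,j)}`. -/
def ptrans {p q : ℕ} {α : Type*} (A : Matrix (Fin p × Fin q) (Fin p × Fin q) α) :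
    Matrix (Fin p × Fin q) (Fin p × Fin q) α :=
  fun x y => A (x.1, y.2) (y.1, x.2)

/-- A density matrix: Hermitian, positive semidefinite, with trace 1. -/
def IsDensityMatrix {n : Type*} [Fintype n] (ρ : Matrix n n ℂ) : Prop :=
  ρ.IsHermitian ∧ ρ.PosSemidef ∧ ρ.trace = 1

/-- Separability in ℂ^p ⊗ ℂ^q : a finite convex combination of Kronecker products
of density matrices. -/
def SeparableState {p q : ℕ} (A : Matrix (Fin p × Fin q) (Fin p × Fin q) ℂ) : Prop :=
  ∃ (m : ℕ) (c : Fin m → ℝ) (ρ : Fin m → Matrix (Fin p) (Fin p) ℂ)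
    (η : Fin m → Matrix (Fin q) (Fin q) ℂ),
    (∀ i, 0 ≤ c i) ∧ (∑ i, c i) = 1 ∧
    (∀ i, IsDensityMatrix (ρ i)) ∧ (∀ i, IsDensityMatrix (η i)) ∧
    A = ∑ i, (c i : ℂ) • (ρ i ⊗ₖ η i)

/-- Separability of a real matrix, viewed as a complex matrix. -/
def SeparableStateR {p q : ℕ} (A : Matrix (Fin p × Fin q) (Fin p × Fin q) ℝ) : Prop :=
  SeparableState (A.map (fun x => (x : ℂ)))

/-- A square real matrix is line sum symmetric if each row sum equals the
corresponding column sum. -/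
def LineSumSymm {q : ℕ} (B : Matrix (Fin q) (Fin q) ℝ) : Prop :=
  ∀ j, (∑ l, B j l) = ∑ l, B l j

/-- A simple circuit matrix: there are distinct indices `i_1, …, i_k` (`k ≥ 1`) with
`C_{i_m i_{m+1}} = 1` (cyclically) and all other entries 0. -/
def IsSimpleCircuit {q : ℕ} (C : Matrix (Fin q) (Fin q) ℝ) : Prop :=
  ∃ (k : ℕ) (hk : 0 < k) (f : Fin k → Fin q), Function.Injective f ∧
    ∀ a b : Fin q, C a b =
      if ∃ m : Fin k, a = f m ∧ b = f ⟨((m : ℕ) + 1) % k, Nat.mod_lt _ hk⟩ then 1 else 0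

/-- The 2q×2q block matrix `[[A11, A12], [A21, A22]]` indexed by `Fin 2 × Fin q`. -/
def twoBlock {q : ℕ} {α : Type*} (A11 A12 A21 A22 : Matrix (Fin q) (Fin q) α) :
    Matrix (Fin 2 × Fin q) (Fin 2 × Fin q) α :=
  fun a b =>
    if a.1 = 0 then (if b.1 = 0 then A11 a.2 b.2 else A12 a.2 b.2)
    else (if b.1 = 0 then A21 a.2 b.2 else A22 a.2 b.2)

/-- The q×q block `A^{i,k}` of a matrix indexed by `Fin p × Fin q`. -/
def blockOf {p q : ℕ} (A : Matrix (Fin p × Fin q) (Fin p × Fin q) ℝ) (i k : Fin p) :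
    Matrix (Fin q) (Fin q) ℝ :=
  fun j l => A (i, j) (k, l)

lemma outerDensity {n : Type*} [Fintype n] (w : n → ℂ)
    (hw : ∑ i, w i * (starRingEnd ℂ) (w i) = 1) :
    IsDensityMatrix (Matrix.vecMulVec w (star w)) := by
  have h : Matrix.vecMulVec w (star w)
      = (Matrix.replicateRow Unit (star w))ᴴ * Matrix.replicateRow Unit (star w) := by
    rw [Matrix.conjTranspose_replicateRow, star_star, Matrix.vecMulVec_eq Unit]
  have hps : (Matrix.vecMulVec w (star w)).PosSemidef := by
    rw [h]; exact Matrix.posSemidef_conjTranspose_mul_self _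
  refine ⟨hps.1, hps, ?_⟩
  simpa [Matrix.trace, Matrix.diag, Matrix.vecMulVec_apply, Complex.star_def] using hw

lemma smulPSD {n : Type*} [Fintype n] {M : Matrix n n ℂ} (hM : M.PosSemidef) {c : ℝ}
    (hc : 0 ≤ c) : ((c : ℂ) • M).PosSemidef := by
  refine ⟨?_, fun x => ?_⟩
  · unfold Matrix.IsHermitian
    rw [Matrix.conjTranspose_smul, hM.1.eq]
    congr 1
    simp [Complex.star_def, Complex.conj_ofReal]
  · exact (Matrix.PosSemidef.smul hM (show (0:ℂ) ≤ (c:ℂ) by exact_mod_cast hc)).2 x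

lemma geomKey {k : ℕ} (hk : 0 < k) {ω : ℂ} (hω : IsPrimitiveRoot ω k) (a b : ℕ) :
    ∑ t : Fin k, ((starRingEnd ℂ) ω) ^ (a * (t : ℕ)) * ω ^ (b * (t : ℕ)) =
      if a % k = b % k then (k : ℂ) else 0 := by
  have hω1 : ω ^ k = 1 := hω.pow_eq_one
  have hωne : ω ≠ 0 := fun h => by simp [h, zero_pow hk.ne'] at hω1
  have habs : ‖ω‖ = 1 := Complex.norm_eq_one_of_pow_eq_one hω1 hk.ne'
  have hconj : (starRingEnd ℂ) ω = ω⁻¹ := (Complex.inv_eq_conj habs).symm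
  set ζ : ℂ := (ω ^ a)⁻¹ * ω ^ b with hζ
  have hterm : ∀ t : ℕ, ((starRingEnd ℂ) ω) ^ (a * t) * ω ^ (b * t) = ζ ^ t := by
    intro t
    simp only [hζ, hconj, mul_pow, inv_pow, ← pow_mul]
  have hζk : ζ ^ k = 1 := by
    rw [hζ, mul_pow, inv_pow, ← pow_mul, ← pow_mul, mul_comm a k, mul_comm b k,
      pow_mul, pow_mul, hω1, one_pow, one_pow, inv_one, one_mul]
  have hmod : ∀ x : ℕ, ω ^ x = ω ^ (x % k) := by
    intro x
    conv_lhs => rw [← Nat.div_add_mod x k]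
    rw [pow_add, pow_mul, hω1, one_pow, one_mul]
  have hiff : ζ = 1 ↔ a % k = b % k := by
    rw [hζ, inv_mul_eq_one₀ (pow_ne_zero _ hωne)]
    constructor
    · intro h
      exact hω.pow_inj (Nat.mod_lt _ hk) (Nat.mod_lt _ hk) (by rw [← hmod, ← hmod, h])
    · intro h
      rw [hmod a, hmod b, h]
  simp only [hterm]
  by_cases h1 : ζ = 1
  · rw [if_pos (hiff.mp h1)]; simp [h1]
  · rw [if_neg (fun hc => h1 (hiff.mpr hc)),
      Fin.sum_univ_eq_sum_range (fun i => ζ ^ i) k, geom_sum_eq h1, hζk, sub_self, zero_div]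

set_option maxHeartbeats 1600000

/-- for a simple circuit matrix C with row-sum diagonal D, the block
matrix (1/(2 tr D)) [[D, −C],[−Cᵀ, D]] is a separable density matrix in ℂ² ⊗ ℂ^q. -/
theorem stmt6 {q : ℕ} (C : Matrix (Fin q) (Fin q) ℝ) (hC : IsSimpleCircuit C)
    (D : Matrix (Fin q) (Fin q) ℝ)
    (hD : D = Matrix.diagonal (fun i => ∑ j, C i j))
    (A : Matrix (Fin 2 × Fin q) (Fin 2 × Fin q) ℝ)
    (hA : A = (1 / (2 * D.trace)) • twoBlock D (-C) (-Cᵀ) D) :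
    IsDensityMatrix (A.map (fun x => (x : ℂ))) ∧ SeparableStateR A := by
  obtain ⟨k, hk, f, hf, hCval⟩ := hC
  have hkR : (k : ℝ) ≠ 0 := Nat.cast_ne_zero.mpr hk.ne'
  have hkC : (k : ℂ) ≠ 0 := Nat.cast_ne_zero.mpr hk.ne'
  set nxt : Fin k → Fin k := fun m => ⟨((m : ℕ) + 1) % k, Nat.mod_lt _ hk⟩ with hnxt
  -- C as a sum of indicators
  have hCsum : ∀ a b, C a b = ∑ m : Fin k, (if a = f m ∧ b = f (nxt m) then (1:ℝ) else 0) := by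
    intro a b
    rw [hCval a b]
    by_cases h : ∃ m : Fin k, a = f m ∧ b = f (nxt m)
    · obtain ⟨m₀, h1, h2⟩ := h
      rw [if_pos ⟨m₀, h1, h2⟩, Finset.sum_eq_single m₀]
      · rw [if_pos ⟨h1, h2⟩]
      · intro m _ hm
        rw [if_neg]
        rintro ⟨ha, hb⟩
        exact hm (hf (h1.symm.trans ha)).symm
      · intro h; exact absurd (Finset.mem_univ m₀) h
    · rw [if_neg h, eq_comm]
      exact Finset.sum_eq_zero fun m _ => if_neg (fun hm => h ⟨m, hm⟩)
  have hrow : ∀ a, (∑ j, C a j) = ∑ m : Fin k, (if a = f m then (1:ℝ) else 0) := by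
    intro a
    simp only [hCsum]
    rw [Finset.sum_comm]
    apply Finset.sum_congr rfl
    intro m _
    by_cases h : a = f m
    · simp [h]
    · simp [h]
  have htr : D.trace = (k : ℝ) := by
    rw [hD, Matrix.trace_diagonal]
    simp only [hrow]
    rw [Finset.sum_comm]
    simp
  -- the root of unity
  set ω : ℂ := Complex.exp (2 * Real.pi * Complex.I / k) with hωdef
  have hω : IsPrimitiveRoot ω k := Complex.isPrimitiveRoot_exp k hk.ne'
  have hω1 : ω ^ k = 1 := hω.pow_eq_one
  have habs : ‖ω‖ = 1 := Complex.norm_eq_one_of_pow_eq_one hω1 hk.ne'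
  have hcc1 : (starRingEnd ℂ) ω * ω = 1 := by
    rw [mul_comm, Complex.mul_conj]
    rw [Complex.normSq_eq_norm_sq, habs]
    norm_num
  have hcc : ∀ x : ℕ, ((starRingEnd ℂ) ω) ^ x * ω ^ x = 1 := by
    intro x
    rw [← mul_pow, hcc1, one_pow]
  -- the vectors
  set u : Fin k → Fin 2 → ℂ :=
    fun t i => (if i = 0 then 1 else -(ω ^ (t:ℕ))) / ((Real.sqrt 2 : ℝ) : ℂ) with hu
  set v : Fin k → Fin q → ℂ := fun t j =>
    (∑ m : Fin k, if j = f m then ((starRingEnd ℂ) ω) ^ ((m:ℕ) * (t:ℕ)) else 0)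
      / ((Real.sqrt k : ℝ) : ℂ) with hv
  set ρ : Fin k → Matrix (Fin 2) (Fin 2) ℂ :=
    fun t => Matrix.vecMulVec (u t) (star (u t)) with hρdef
  set η : Fin k → Matrix (Fin q) (Fin q) ℂ :=
    fun t => Matrix.vecMulVec (v t) (star (v t)) with hηdef
  have h2 : ((Real.sqrt 2 : ℝ) : ℂ) * ((Real.sqrt 2 : ℝ) : ℂ) = 2 := by
    norm_cast
    exact Real.mul_self_sqrt (by norm_num)
  have hkk : ((Real.sqrt k : ℝ) : ℂ) * ((Real.sqrt k : ℝ) : ℂ) = (k : ℂ) := by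
    norm_cast
    exact Real.mul_self_sqrt (Nat.cast_nonneg k)
  -- entries of ρ
  have hρe : ∀ (t : Fin k) (i i' : Fin 2), ρ t i i' =
      (if i = 0 then 1 else -(ω ^ (t:ℕ))) *
        (if i' = 0 then 1 else -(((starRingEnd ℂ) ω) ^ (t:ℕ))) / 2 := by
    intro t i i'
    simp only [hρdef, Matrix.vecMulVec_apply, Pi.star_apply, Complex.star_def, hu, map_div₀,
      Complex.conj_ofReal, apply_ite (starRingEnd ℂ), _root_.map_one, map_neg, map_pow]
    rw [div_mul_div_comm, h2]
  have hρ00 : ∀ t : Fin k, ρ t 0 0 = 1 / 2 := by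
    intro t; rw [hρe]; norm_num
  have hρ01 : ∀ t : Fin k, ρ t 0 1 = -(((starRingEnd ℂ) ω) ^ (t:ℕ)) / 2 := by
    intro t; rw [hρe]
    rw [if_pos rfl, if_neg (by decide : (1:Fin 2) ≠ 0), one_mul]
  have hρ10 : ∀ t : Fin k, ρ t 1 0 = -(ω ^ (t:ℕ)) / 2 := by
    intro t; rw [hρe]
    rw [if_pos rfl, if_neg (by decide : (1:Fin 2) ≠ 0), mul_one]
  have hρ11 : ∀ t : Fin k, ρ t 1 1 = 1 / 2 := by
    intro t; rw [hρe]
    rw [if_neg (by decide : (1:Fin 2) ≠ 0), if_neg (by decide : (1:Fin 2) ≠ 0),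
      neg_mul_neg, mul_comm, hcc]
  -- conjugate of v
  have hconjv : ∀ t j, (starRingEnd ℂ) (v t j) =
      (∑ n : Fin k, if j = f n then ω ^ ((n:ℕ) * (t:ℕ)) else 0) / ((Real.sqrt k : ℝ) : ℂ) := by
    intro t j
    simp only [hv, map_div₀, map_sum, apply_ite (starRingEnd ℂ), map_pow, Complex.conj_conj,
      map_zero, Complex.conj_ofReal]
  -- entries of η
  have hηe : ∀ (t : Fin k) (j j' : Fin q), η t j j' =
      (∑ m : Fin k, ∑ n : Fin k, (if j = f m then (1:ℂ) else 0) * (if j' = f n then 1 else 0)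
        * (((starRingEnd ℂ) ω) ^ ((m:ℕ) * (t:ℕ)) * ω ^ ((n:ℕ) * (t:ℕ)))) / (k : ℂ) := by
    intro t j j'
    simp only [hηdef, Matrix.vecMulVec_apply, Pi.star_apply, Complex.star_def, hconjv]
    simp only [hv]
    rw [div_mul_div_comm, hkk, Finset.sum_mul_sum]
    congr 1
    apply Finset.sum_congr rfl; intro m _
    apply Finset.sum_congr rfl; intro n _
    split_ifs <;> ring
  -- collapsing sums over the range of f
  have hsum_range : ∀ (F : Fin q → ℂ), (∀ j, (∀ m, j ≠ f m) → F j = 0) →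
      ∑ j, F j = ∑ m, F (f m) := by
    intro F hF
    rw [← Finset.sum_image (g := f) (fun m _ n _ h => hf h)]
    apply (Finset.sum_subset (Finset.subset_univ _) _).symm
    intro j _ hj
    exact hF j (fun m hm => hj (Finset.mem_image.mpr ⟨m, Finset.mem_univ m, hm.symm⟩))
  have hvalc : ∀ (c : Fin k → ℂ) (m' : Fin k), (∑ m, if f m' = f m then c m else 0) = c m' := by
    intro c m'
    rw [Finset.sum_eq_single m']
    · rw [if_pos rfl]
    · intro m _ hm; rw [if_neg (fun h => hm (hf h).symm)]
    · intro h; exact absurd (Finset.mem_univ m') h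
  have hNN : ∀ (c₁ c₂ : Fin k → ℂ),
      (∑ j : Fin q, (∑ m, if j = f m then c₁ m else 0) * (∑ n, if j = f n then c₂ n else 0))
        = ∑ m, c₁ m * c₂ m := by
    intro c₁ c₂
    rw [hsum_range (fun j => (∑ m : Fin k, if j = f m then c₁ m else 0) *
        (∑ n : Fin k, if j = f n then c₂ n else 0))
      (fun j hj => by
        show (∑ m : Fin k, if j = f m then c₁ m else 0) *
            (∑ n : Fin k, if j = f n then c₂ n else 0) = 0
        rw [Finset.sum_eq_zero (fun m _ => if_neg (hj m)), zero_mul])]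
    apply Finset.sum_congr rfl
    intro m _
    rw [hvalc, hvalc]
  -- traces
  have tru : ∀ t, ∑ i, u t i * (starRingEnd ℂ) (u t i) = 1 := by
    intro t
    have e : ∀ i, u t i * (starRingEnd ℂ) (u t i) = ρ t i i := by
      intro i
      rw [hρdef]
      simp [Matrix.vecMulVec_apply, Complex.star_def]
    rw [Fin.sum_univ_two, e 0, e 1, hρ00, hρ11]
    norm_num
  have trv : ∀ t, ∑ j, v t j * (starRingEnd ℂ) (v t j) = 1 := by
    intro t
    have e : ∀ j, v t j * (starRingEnd ℂ) (v t j) =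
        ((∑ m : Fin k, if j = f m then ((starRingEnd ℂ) ω) ^ ((m:ℕ) * (t:ℕ)) else 0) *
          (∑ n : Fin k, if j = f n then ω ^ ((n:ℕ) * (t:ℕ)) else 0)) / (k:ℂ) := by
      intro j
      rw [hconjv, hv, div_mul_div_comm, hkk]
    simp only [e]
    rw [← Finset.sum_div, hNN]
    simp only [hcc]
    simp [hkC]
  have hρd : ∀ t, IsDensityMatrix (ρ t) := fun t => outerDensity _ (tru t)
  have hηd : ∀ t, IsDensityMatrix (η t) := fun t => outerDensity _ (trv t)
  -- density of Kronecker products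
  have hkrod : ∀ t, IsDensityMatrix (ρ t ⊗ₖ η t) := by
    intro t
    have hw : ρ t ⊗ₖ η t = Matrix.vecMulVec (fun p : Fin 2 × Fin q => u t p.1 * v t p.2)
        (star (fun p : Fin 2 × Fin q => u t p.1 * v t p.2)) := by
      ext ⟨i, j⟩ ⟨i', j'⟩
      simp only [Matrix.kroneckerMap_apply, Matrix.vecMulVec_apply, hρdef, hηdef,
        Pi.star_apply, Complex.star_def, _root_.map_mul, map_inv₀, map_div₀,
        Complex.conj_ofReal]
      ring
    rw [hw]
    apply outerDensity
    rw [Fintype.sum_prod_type]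
    have hin : ∀ i : Fin 2, ∑ j : Fin q,
        (u t i * v t j) * (starRingEnd ℂ) (u t i * v t j)
          = u t i * (starRingEnd ℂ) (u t i) := by
      intro i
      have e : ∀ j, (u t i * v t j) * (starRingEnd ℂ) (u t i * v t j)
          = (u t i * (starRingEnd ℂ) (u t i)) * (v t j * (starRingEnd ℂ) (v t j)) := by
        intro j; rw [_root_.map_mul]; ring
      rw [Finset.sum_congr rfl fun j _ => e j, ← Finset.mul_sum, trv, mul_one]
    rw [Finset.sum_congr rfl fun i _ => hin i, tru]
  -- the central sum computation
  have hmainsum : ∀ (ε ε' : ℕ) (j j' : Fin q),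
      ∑ t : Fin k, (((starRingEnd ℂ) ω) ^ (ε' * (t:ℕ)) * ω ^ (ε * (t:ℕ))) * η t j j' =
      ∑ m : Fin k, ∑ n : Fin k, (if j = f m then (1:ℂ) else 0) * (if j' = f n then 1 else 0)
        * (if ((m:ℕ) + ε') % k = ((n:ℕ) + ε) % k then 1 else 0) := by
    intro ε ε' j j'
    have step1 : ∀ t : Fin k,
        (((starRingEnd ℂ) ω) ^ (ε' * (t:ℕ)) * ω ^ (ε * (t:ℕ))) * η t j j' =
        (∑ m : Fin k, ∑ n : Fin k, (if j = f m then (1:ℂ) else 0) * (if j' = f n then 1 else 0)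
            * (((starRingEnd ℂ) ω) ^ (((m:ℕ)+ε') * (t:ℕ)) * ω ^ (((n:ℕ)+ε) * (t:ℕ)))) / (k:ℂ) := by
      intro t
      rw [hηe, mul_div_assoc']
      congr 1
      rw [Finset.mul_sum]
      apply Finset.sum_congr rfl; intro m _
      rw [Finset.mul_sum]
      apply Finset.sum_congr rfl; intro n _
      rw [add_mul, add_mul, pow_add, pow_add]
      ring
    rw [Finset.sum_congr rfl fun t _ => step1 t, ← Finset.sum_div]
    rw [Finset.sum_comm]
    have step2 : ∀ m : Fin k,
        (∑ t : Fin k, ∑ n : Fin k, (if j = f m then (1:ℂ) else 0) * (if j' = f n then 1 else 0)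
            * (((starRingEnd ℂ) ω) ^ (((m:ℕ)+ε') * (t:ℕ)) * ω ^ (((n:ℕ)+ε) * (t:ℕ)))) =
        ∑ n : Fin k, (if j = f m then (1:ℂ) else 0) * (if j' = f n then 1 else 0)
            * (if ((m:ℕ) + ε') % k = ((n:ℕ) + ε) % k then (k:ℂ) else 0) := by
      intro m
      rw [Finset.sum_comm]
      apply Finset.sum_congr rfl; intro n _
      rw [← Finset.mul_sum, geomKey hk hω ((m:ℕ)+ε') ((n:ℕ)+ε)]
    rw [Finset.sum_congr rfl fun m _ => step2 m]
    rw [div_eq_iff hkC, Finset.sum_mul]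
    apply Finset.sum_congr rfl; intro m _
    rw [Finset.sum_mul]
    apply Finset.sum_congr rfl; intro n _
    split_ifs <;> ring
  -- real matrix entries as indicator sums (over ℂ)
  have hDe : ∀ j j' : Fin q, ((D j j' : ℝ) : ℂ) =
      ∑ m : Fin k, (if j = f m then (1:ℂ) else 0) * (if j' = f m then 1 else 0) := by
    intro j j'
    rw [hD]
    by_cases h : j = j'
    · subst h
      rw [Matrix.diagonal_apply_eq, hrow]
      push_cast
      apply Finset.sum_congr rfl; intro m _
      split_ifs <;> norm_num
    · rw [Matrix.diagonal_apply_ne _ h]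
      rw [Complex.ofReal_zero, eq_comm]
      apply Finset.sum_eq_zero
      intro m _
      split_ifs with h1 h2
      · exact absurd (h1.trans h2.symm) h
      all_goals ring
  have hCe : ∀ j j' : Fin q, ((C j j' : ℝ) : ℂ) =
      ∑ m : Fin k, (if j = f m then (1:ℂ) else 0) * (if j' = f (nxt m) then 1 else 0) := by
    intro j j'
    rw [hCsum j j']
    push_cast
    apply Finset.sum_congr rfl; intro m _
    by_cases h1 : j = f m <;> by_cases h2 : j' = f (nxt m) <;> simp [h1, h2]
  -- the three sum identities
  have hS00 : ∀ j j' : Fin q, ∑ t : Fin k, η t j j' = ((D j j' : ℝ) : ℂ) := by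
    intro j j'
    have h := hmainsum 0 0 j j'
    simp only [Nat.zero_mul, pow_zero, one_mul] at h
    rw [h, hDe]
    apply Finset.sum_congr rfl; intro m _
    have e : ∀ n : Fin k, (if j = f m then (1:ℂ) else 0) * (if j' = f n then 1 else 0)
        * (if ((m:ℕ) + 0) % k = ((n:ℕ) + 0) % k then 1 else 0) =
        if n = m then (if j = f m then (1:ℂ) else 0) * (if j' = f n then 1 else 0) else 0 := by
      intro n
      by_cases hmn : n = m
      · subst hmn; simp
      · have hcon : ¬(((m:ℕ) + 0) % k = ((n:ℕ) + 0) % k) := by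
          rw [add_zero, add_zero, Nat.mod_eq_of_lt m.isLt, Nat.mod_eq_of_lt n.isLt]
          exact fun hcon => hmn (Fin.val_injective hcon.symm)
        rw [if_neg hcon, if_neg hmn, mul_zero]
    rw [Finset.sum_congr rfl fun n _ => e n, Finset.sum_ite_eq' Finset.univ m]
    simp
  have hS01 : ∀ j j' : Fin q,
      ∑ t : Fin k, ((starRingEnd ℂ) ω) ^ (t:ℕ) * η t j j' = ((C j j' : ℝ) : ℂ) := by
    intro j j'
    have h := hmainsum 0 1 j j'
    simp only [Nat.zero_mul, pow_zero, one_mul, Nat.one_mul, mul_one] at h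
    rw [h, hCe]
    apply Finset.sum_congr rfl; intro m _
    have e : ∀ n : Fin k, (if j = f m then (1:ℂ) else 0) * (if j' = f n then 1 else 0)
        * (if ((m:ℕ) + 1) % k = ((n:ℕ) + 0) % k then 1 else 0) =
        if n = nxt m then (if j = f m then (1:ℂ) else 0) * (if j' = f n then 1 else 0) else 0 := by
      intro n
      by_cases hmn : n = nxt m
      · subst hmn
        have hcon : ((m:ℕ) + 1) % k = (((nxt m):ℕ) + 0) % k := by
          simp [hnxt, Nat.mod_eq_of_lt (Nat.mod_lt _ hk)]
        rw [if_pos hcon, if_pos rfl, mul_one]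
      · have hcon : ¬(((m:ℕ) + 1) % k = ((n:ℕ) + 0) % k) := by
          rw [add_zero, Nat.mod_eq_of_lt n.isLt]
          exact fun hcon => hmn (Fin.val_injective (by simp [hnxt, ← hcon]))
        rw [if_neg hcon, if_neg hmn, mul_zero]
    rw [Finset.sum_congr rfl fun n _ => e n, Finset.sum_ite_eq' Finset.univ (nxt m)]
    simp
  have hS10 : ∀ j j' : Fin q,
      ∑ t : Fin k, ω ^ (t:ℕ) * η t j j' = ((C j' j : ℝ) : ℂ) := by
    intro j j'
    have h := hmainsum 1 0 j j'
    simp only [Nat.zero_mul, pow_zero, one_mul, Nat.one_mul, mul_one] at h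
    rw [h, hCe j' j, Finset.sum_comm]
    apply Finset.sum_congr rfl; intro n _
    have e : ∀ m : Fin k, (if j = f m then (1:ℂ) else 0) * (if j' = f n then 1 else 0)
        * (if ((m:ℕ) + 0) % k = ((n:ℕ) + 1) % k then 1 else 0) =
        if m = nxt n then (if j = f m then (1:ℂ) else 0) * (if j' = f n then 1 else 0) else 0 := by
      intro m
      by_cases hmn : m = nxt n
      · subst hmn
        have hcon : (((nxt n):ℕ) + 0) % k = ((n:ℕ) + 1) % k := by
          simp [hnxt, Nat.mod_eq_of_lt (Nat.mod_lt _ hk)]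
        rw [if_pos hcon, if_pos rfl, mul_one]
      · have hcon : ¬(((m:ℕ) + 0) % k = ((n:ℕ) + 1) % k) := by
          rw [add_zero, Nat.mod_eq_of_lt m.isLt]
          exact fun hcon => hmn (Fin.val_injective (by simp [hnxt, hcon]))
        rw [if_neg hcon, if_neg hmn, mul_zero]
    rw [Finset.sum_congr rfl fun m _ => e m, Finset.sum_ite_eq' Finset.univ (nxt n),
      if_pos (Finset.mem_univ _), mul_comm]
  -- the decomposition
  have hdecomp : A.map (fun x => (x : ℂ)) = ∑ t : Fin k, (((1:ℝ) / k : ℝ) : ℂ) • (ρ t ⊗ₖ η t) := by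
    ext ⟨i, j⟩ ⟨i', j'⟩
    rw [Matrix.map_apply, hA, htr]
    rw [Matrix.smul_apply, smul_eq_mul]
    simp only [Matrix.sum_apply, Matrix.smul_apply, smul_eq_mul, Matrix.kroneckerMap_apply]
    fin_cases i <;> fin_cases i' <;> simp only [twoBlock, Fin.mk_zero, Fin.mk_one, Fin.isValue, reduceIte]
    · -- (0,0)
      have e : ∀ t : Fin k, (((1:ℝ) / k : ℝ) : ℂ) * (ρ t 0 0 * η t j j')
          = (1 / (2 * (k:ℂ))) * η t j j' := by
        intro t; rw [hρ00]; push_cast; ring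
      rw [Finset.sum_congr rfl fun t _ => e t, ← Finset.mul_sum, hS00]
      push_cast
      ring
    · -- (0,1)
      have e : ∀ t : Fin k, (((1:ℝ) / k : ℝ) : ℂ) * (ρ t 0 1 * η t j j')
          = (-(1 / (2 * (k:ℂ)))) * (((starRingEnd ℂ) ω) ^ (t:ℕ) * η t j j') := by
        intro t; rw [hρ01]; push_cast; ring
      rw [Finset.sum_congr rfl fun t _ => e t, ← Finset.mul_sum, hS01]
      push_cast [Matrix.neg_apply]
      ring
    · -- (1,0)
      have e : ∀ t : Fin k, (((1:ℝ) / k : ℝ) : ℂ) * (ρ t 1 0 * η t j j')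
          = (-(1 / (2 * (k:ℂ)))) * (ω ^ (t:ℕ) * η t j j') := by
        intro t; rw [hρ10]; push_cast; ring
      rw [Finset.sum_congr rfl fun t _ => e t, ← Finset.mul_sum, hS10]
      push_cast [Matrix.neg_apply, Matrix.transpose_apply]
      ring
    · -- (1,1)
      have e : ∀ t : Fin k, (((1:ℝ) / k : ℝ) : ℂ) * (ρ t 1 1 * η t j j')
          = (1 / (2 * (k:ℂ))) * η t j j' := by
        intro t; rw [hρ11]; push_cast; ring
      rw [Finset.sum_congr rfl fun t _ => e t, ← Finset.mul_sum, hS00]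
      push_cast
      ring
  -- density of A
  have hAd : IsDensityMatrix (A.map (fun x => (x : ℂ))) := by
    rw [hdecomp]
    have hpsd : (∑ t : Fin k, (((1:ℝ) / k : ℝ) : ℂ) • (ρ t ⊗ₖ η t)).PosSemidef := by
      apply Finset.sum_induction _ _ (fun a b ha hb => ha.add hb) Matrix.PosSemidef.zero
      intro t _
      exact smulPSD (hkrod t).2.1 (by positivity)
    refine ⟨hpsd.1, hpsd, ?_⟩
    rw [Matrix.trace_sum]
    have e : ∀ t : Fin k, ((((1:ℝ) / k : ℝ) : ℂ) • (ρ t ⊗ₖ η t)).trace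
        = (((1:ℝ) / k : ℝ) : ℂ) := by
      intro t
      rw [Matrix.trace_smul, (hkrod t).2.2, smul_eq_mul, mul_one]
    rw [Finset.sum_congr rfl fun t _ => e t, Finset.sum_const]
    simp only [Finset.card_univ, Fintype.card_fin, nsmul_eq_mul]
    push_cast
    field_simp
  refine ⟨hAd, ?_⟩
  exact ⟨k, fun _ => (1:ℝ)/k, ρ, η, fun _ => by positivity,
    by rw [Finset.sum_const]; simp only [Finset.card_univ, Fintype.card_fin, nsmul_eq_mul]; field_simp,
    hρd, hηd, hdecomp⟩
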